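/- For the Lie algebra g₅ with brackets [X,Z]=X, [Y,W]=Y and orthonormal basis {X,Y,Z,W}, the sectional curvature of the plane spanned by orthonormal vectors U = aX+bY+cZ+dW and V = a'X+b'Y+c'Z+d'W equals −{(ac'−ca')² + (bd'−db')²} ≤ 0, and the scalar curvature is the constant −4. -/

import Mathlib

open Real

abbrev V4 := Fin 4 → ℝ

/-- the inner product making the basis orthonormal -/
def ip (u v : V4) : ℝ := u 0 * v 0 + u 1 * v 1 + u 2 * v 2 + u 3 * v 3

def X : V4 := ![1, 0, 0, 0]
def Y : V4 := ![0, 1, 0, 0]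
def Z : V4 := ![0, 0, 1, 0]
def W : V4 := ![0, 0, 0, 1]

def e : Fin 4 → V4 := ![X, Y, Z, W]

def br (u v : V4) : V4 := (u 0 * v 2 - u 2 * v 0) • X + (u 1 * v 3 - u 3 * v 1) • Y

lemma nab_eq (nabla : V4 → V4 → V4)
    (hK : ∀ u v w : V4, 2 * ip (nabla u v) w = ip (br u v) w - ip (br v w) u + ip (br w u) v)
    (u v : V4) : nabla u v = ![u 0 * v 2, u 1 * v 3, -(u 0 * v 0), -(u 1 * v 1)] := by
  have h0 := hK u v X
  have h1 := hK u v Y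
  have h2 := hK u v Z
  have h3 := hK u v W
  simp [ip, X, Y, Z, W, br] at h0 h1 h2 h3
  funext i
  fin_cases i <;> simp <;> linarith

theorem stmt11 (nabla : V4 → V4 → V4)
    (hK : ∀ u v w : V4, 2 * ip (nabla u v) w = ip (br u v) w - ip (br v w) u + ip (br w u) v)
    (R : V4 → V4 → V4 → V4)
    (hR : ∀ u v w : V4, R u v w = nabla u (nabla v w) - nabla v (nabla u w) - nabla (br u v) w)
    (a b c d a' b' c' d' : ℝ) (u v : V4)
    (hu : u = a • X + b • Y + c • Z + d • W)
    (hv : v = a' • X + b' • Y + c' • Z + d' • W)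
    (huu : ip u u = 1) (hvv : ip v v = 1) (huv : ip u v = 0) :
    ip (R v u u) v / (ip u u * ip v v - ip u v ^ 2) = -((a * c' - c * a') ^ 2 + (b * d' - d * b') ^ 2) ∧
    ip (R v u u) v / (ip u u * ip v v - ip u v ^ 2) ≤ 0 ∧
    (∑ j : Fin 4, ∑ k : Fin 4, if j ≠ k then ip (R (e k) (e j) (e j)) (e k) / (ip (e j) (e j) * ip (e k) (e k) - ip (e j) (e k) ^ 2) else 0) = -4 := by
  have hnab := nab_eq nabla hK
  have hden : ip u u * ip v v - ip u v ^ 2 = 1 := by rw [huu, hvv, huv]; ring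
  have key : ∀ p q : V4, ip (R q p p) q =
      -((p 0 * q 2 - p 2 * q 0) ^ 2 + (p 1 * q 3 - p 3 * q 1) ^ 2) := by
    intro p q
    rw [hR, hnab, hnab, hnab, hnab, hnab]
    simp [ip, br, X, Y, Z, W]
    ring
  constructor
  · rw [hden, key, hu, hv]
    simp [X, Y, Z, W]
    try ring
  constructor
  · rw [hden, key]
    simp only [div_one, neg_nonpos]
    positivity
  · simp only [Fin.sum_univ_four, e, key]
    norm_num [X, Y, Z, W, ip, Matrix.vecHead, Matrix.vecTail, Fin.ext_iff]
    simp [Matrix.cons_val]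
    norm_num
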